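/- Let L ⊂ ℝⁿ be a convex body with 0 ∈ int L and L ⊂ −rL for some r ≥ 1, let 0 < C ≤ 1 and z ∈ (1−C)L. If f ∈ ℝⁿ satisfies ‖f‖_{(L_z)°} ≤ 1 and A := 1 + ⟨f, z⟩, then 1/((1−C)r + 1) ≤ A ≤ 1/C and ‖f‖_{L°} ≤ A. -/

import Mathlib

open RealInnerProductSpace Pointwise

/-- The polar body of a set in Euclidean space. -/
def polarSet {n : ℕ} (M : Set (EuclideanSpace ℝ (Fin n))) : Set (EuclideanSpace ℝ (Fin n)) :=
  {x | ∀ y ∈ M, inner ℝ x y ≤ (1 : ℝ)}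

lemma polarSet_convex {n : ℕ} (M : Set (EuclideanSpace ℝ (Fin n))) :
    Convex ℝ (polarSet M) := by
  intro a ha b hb s t hs ht hst y hy
  have h1 : inner ℝ a y ≤ (1:ℝ) := ha y hy
  have h2 : inner ℝ b y ≤ (1:ℝ) := hb y hy
  have : (inner ℝ (s • a + t • b) y : ℝ) = s * inner ℝ a y + t * inner ℝ b y := by
    rw [inner_add_left, real_inner_smul_left, real_inner_smul_left]
  calc (inner ℝ (s • a + t • b) y : ℝ) = s * inner ℝ a y + t * inner ℝ b y := this
    _ ≤ s * 1 + t * 1 := by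
        gcongr
    _ = 1 := by linarith

lemma polarSet_closed {n : ℕ} (M : Set (EuclideanSpace ℝ (Fin n))) :
    IsClosed (polarSet M) := by
  have : polarSet M = ⋂ y ∈ M, {x : EuclideanSpace ℝ (Fin n) | inner ℝ x y ≤ (1:ℝ)} := by
    ext x; simp [polarSet]
  rw [this]
  refine isClosed_biInter fun y _ => ?_
  exact isClosed_le (Continuous.inner continuous_id continuous_const) continuous_const

theorem polar_gauge_translate_bounds {n : ℕ} (L : Set (EuclideanSpace ℝ (Fin n)))
    (hLcomp : IsCompact L) (hLconv : Convex ℝ L) (h0 : 0 ∈ interior L)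
    (r : ℝ) (hr : 1 ≤ r) (hLr : L ⊆ (-r) • L)
    (C : ℝ) (hC0 : 0 < C) (hC1 : C ≤ 1)
    (z : EuclideanSpace ℝ (Fin n)) (hz : z ∈ (1 - C) • L)
    (f : EuclideanSpace ℝ (Fin n))
    (hf : gauge (polarSet ((fun w => w - z) '' L)) f ≤ 1) :
    1 / ((1 - C) * r + 1) ≤ 1 + ⟪f, z⟫ ∧ 1 + ⟪f, z⟫ ≤ 1 / C ∧
      gauge (polarSet L) f ≤ 1 + ⟪f, z⟫ := by
  set M := polarSet ((fun w => w - z) '' L) with hMdef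
  -- M is a neighborhood of 0
  obtain ⟨R, hR⟩ := (hLcomp.image (continuous_id.sub continuous_const)).isBounded.subset_closedBall 0
  have hRpos : (0:ℝ) < max R 1 := lt_max_of_lt_right one_pos
  have hball : Metric.closedBall (0 : EuclideanSpace ℝ (Fin n)) (max R 1)⁻¹ ⊆ M := by
    intro x hx y hy
    obtain ⟨w, hw, rfl⟩ := hy
    have h1 : ‖x‖ ≤ (max R 1)⁻¹ := by
      simpa [Metric.mem_closedBall] using hx
    have h2 : ‖w - z‖ ≤ max R 1 := by
      have := hR ⟨w, hw, rfl⟩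
      simp only [Metric.mem_closedBall, dist_zero_right] at this
      exact this.trans (le_max_left _ _)
    calc (inner ℝ x (w - z) : ℝ) ≤ ‖x‖ * ‖w - z‖ := real_inner_le_norm _ _
      _ ≤ (max R 1)⁻¹ * max R 1 := by
          apply mul_le_mul h1 h2 (norm_nonneg _) (by positivity)
      _ = 1 := inv_mul_cancel₀ hRpos.ne'
  have hMnhds : M ∈ nhds (0 : EuclideanSpace ℝ (Fin n)) :=
    Filter.mem_of_superset (Metric.closedBall_mem_nhds 0 (by positivity)) hball
  have hfM : f ∈ M := by
    have := (gauge_le_one_iff_mem_closure (polarSet_convex _) hMnhds).mp hf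
    rwa [(polarSet_closed _).closure_eq] at this
  -- key inequality
  have hA : ∀ x ∈ L, ⟪f, x⟫ ≤ 1 + ⟪f, z⟫ := by
    intro x hx
    have := hfM (x - z) ⟨x, hx, rfl⟩
    rw [inner_sub_right] at this
    linarith
  set A := 1 + ⟪f, z⟫ with hAdef
  obtain ⟨l, hl, hzeq⟩ := Set.mem_smul_set.mp hz
  obtain ⟨m, hm, hlm⟩ := Set.mem_smul_set.mp (hLr hl)
  have hfl : ⟪f, l⟫ ≤ A := hA l hl
  have hfm : ⟪f, m⟫ ≤ A := hA m hm
  have hzval : ⟪f, z⟫ = (1 - C) * ⟪f, l⟫ := by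
    rw [← hzeq, real_inner_smul_right]
  have hlval : ⟪f, l⟫ = -r * ⟪f, m⟫ := by
    rw [← hlm, real_inner_smul_right]
  have h1C : (0:ℝ) ≤ 1 - C := by linarith
  have hD : (0:ℝ) ≤ (1 - C) * r := by positivity
  -- lower bound
  have hlow : 1 / ((1 - C) * r + 1) ≤ A := by
    have hAge : (1 + (1 - C) * r) * A ≥ 1 := by
      have h5 : ⟪f, z⟫ ≥ -((1 - C) * r) * A := by
        rw [hzval, hlval]
        nlinarith
      have h6 : A = 1 + ⟪f, z⟫ := hAdef
      nlinarith
    rw [div_le_iff₀ (by linarith)]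
    nlinarith
  have hApos : 0 < A := lt_of_lt_of_le (by positivity) hlow
  -- upper bound
  have hup : A ≤ 1 / C := by
    have h5 : ⟪f, z⟫ ≤ (1 - C) * A := by
      rw [hzval]; nlinarith
    have h6 : A = 1 + ⟪f, z⟫ := hAdef
    rw [le_div_iff₀ hC0]
    nlinarith
  refine ⟨hlow, hup, ?_⟩
  -- gauge bound
  have hmem : f ∈ A • polarSet L := by
    rw [Set.mem_smul_set_iff_inv_smul_mem₀ hApos.ne']
    intro y hy
    rw [real_inner_smul_left]
    have := hA y hy
    calc A⁻¹ * ⟪f, y⟫ ≤ A⁻¹ * A := by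
          apply mul_le_mul_of_nonneg_left this (by positivity)
      _ = 1 := inv_mul_cancel₀ hApos.ne'
  exact gauge_le_of_mem hApos.le hmem
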